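/- Let Γ be a subgroup of ℂˣ with the accumulation property. Let P, Q ∈ ℂ[X] be nonzero coprime polynomials, and let c : Γ → ℂˣ be a function such that for every γ ∈ Γ the polynomial identity P(γ·X)·Q(X) = c(γ)·Q(γ·X)·P(X) holds, where P(γ·X) denotes the composition of P with the polynomial γ·X. Then P and Q have no zeros in ℂ∖{0}, and there exist c₀ ∈ ℂ with c₀ ≠ 0 and n ∈ ℤ such that P(z)/Q(z) = c₀·z^n for every z ≠ 0. -/

import Mathlib

/-- A subgroup of `ℂˣ` has the accumulation property if it contains an element of modulus
`≠ 1`, or a sequence of elements `≠ 1` converging to `1` in `ℂ`. -/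
def HasAccumulation (Γ : Subgroup ℂˣ) : Prop :=
  (∃ q : ℂˣ, q ∈ Γ ∧ ‖(q : ℂ)‖ ≠ 1) ∨
    ∃ γ : ℕ → ℂˣ, (∀ n, γ n ∈ Γ) ∧ (∀ n, γ n ≠ 1) ∧
      Filter.Tendsto (fun n => ((γ n : ℂˣ) : ℂ)) Filter.atTop (nhds 1)

open Polynomial

lemma aux_empty (Γ : Subgroup ℂˣ) (hacc : HasAccumulation Γ) (S : Set ℂ)
    (hfin : S.Finite) (h0 : ∀ z ∈ S, z ≠ 0)
    (hinv : ∀ γ : ℂˣ, γ ∈ Γ → ∀ z ∈ S, (γ : ℂ) * z ∈ S) :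
    S = ∅ := by
  by_contra h
  obtain ⟨z, hz⟩ := Set.nonempty_iff_ne_empty.mpr h
  have hz0 : z ≠ 0 := h0 z hz
  rcases hacc with ⟨q, hqΓ, hq⟩ | ⟨γ, hγΓ, hγ1, hγlim⟩
  · have hmem : ∀ n : ℕ, ((q : ℂ) ^ n) * z ∈ S := by
      intro n
      induction n with
      | zero => simpa using hz
      | succ n ih =>
        have := hinv q hqΓ _ ih
        rw [← mul_assoc] at this
        simpa [pow_succ, mul_comm] using this
    have hinj : Function.Injective (fun n : ℕ => ((q : ℂ) ^ n) * z) := by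
      intro n m hnm
      simp only at hnm
      have hq0 : (q : ℂ) ≠ 0 := q.ne_zero
      have h1 : ((q : ℂ)) ^ n = (q : ℂ) ^ m := mul_right_cancel₀ hz0 hnm
      have h2 : (‖(q : ℂ)‖) ^ n = (‖(q : ℂ)‖) ^ m := by
        rw [← norm_pow, ← norm_pow, h1]
      have habs0 : ‖(q : ℂ)‖ ≠ 0 := by simpa using hq0
      have hlog : (n : ℝ) * Real.log (‖(q : ℂ)‖) =
          (m : ℝ) * Real.log (‖(q : ℂ)‖) := by
        rw [← Real.log_pow, ← Real.log_pow, h2]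
      have hlogne : Real.log (‖(q : ℂ)‖) ≠ 0 := by
        intro hl
        rcases Real.log_eq_zero.mp hl with h | h | h
        · exact habs0 h
        · exact hq h
        · have := norm_nonneg (q : ℂ); linarith
      exact_mod_cast mul_right_cancel₀ hlogne hlog
    exact (Set.infinite_of_injective_forall_mem hinj hmem) hfin
  · have hmem : ∀ n, ((γ n : ℂ)) * z ∈ S \ {z} := by
      intro n
      refine ⟨hinv _ (hγΓ n) z hz, ?_⟩
      simp only [Set.mem_singleton_iff]
      intro hzz
      have : (γ n : ℂ) = 1 := mul_right_cancel₀ hz0 (by simpa using hzz)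
      exact hγ1 n (Units.val_eq_one.mp this)
    have hlim : Filter.Tendsto (fun n => ((γ n : ℂ)) * z) Filter.atTop (nhds z) := by
      simpa using hγlim.mul_const z
    have hcl : IsClosed (S \ {z}) := (hfin.subset Set.diff_subset).isClosed
    have : z ∈ S \ {z} := hcl.mem_of_tendsto hlim (Filter.Eventually.of_forall hmem)
    exact this.2 rfl

lemma monomial_form (P : ℂ[X]) (hP : P ≠ 0) (h : ∀ z : ℂ, z ≠ 0 → P.eval z ≠ 0) :
    ∀ z : ℂ, P.eval z = P.leadingCoeff * z ^ (Multiset.card P.roots) := by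
  have hroots : ∀ r ∈ P.roots, r = 0 := by
    intro r hr
    by_contra hr0
    exact h r hr0 (Polynomial.isRoot_of_mem_roots hr)
  have hrep : P.roots = Multiset.replicate (Multiset.card P.roots) 0 :=
    Multiset.eq_replicate_card.mpr hroots
  have hPeq : P = C P.leadingCoeff * (P.roots.map fun a => X - C a).prod :=
    (IsAlgClosed.splits P).eq_prod_roots
  intro z
  conv_lhs => rw [hPeq, hrep]
  simp [Multiset.map_replicate, Multiset.prod_replicate]



/-- a rational map semi-equivariant under a subgroup with accumulation has
its zeros and poles in `{0, ∞}`, hence is a monomial. -/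
theorem stmt_11 (Γ : Subgroup ℂˣ) (hacc : HasAccumulation Γ)
    (P Q : Polynomial ℂ) (hP : P ≠ 0) (hQ : Q ≠ 0) (hcop : IsCoprime P Q)
    (c : Γ → ℂˣ)
    (heq : ∀ γ : Γ,
      P.comp (Polynomial.C ((γ : ℂˣ) : ℂ) * Polynomial.X) * Q =
        Polynomial.C ((c γ : ℂˣ) : ℂ) *
          (Q.comp (Polynomial.C ((γ : ℂˣ) : ℂ) * Polynomial.X)) * P) :
    (∀ z : ℂ, z ≠ 0 → P.eval z ≠ 0) ∧ (∀ z : ℂ, z ≠ 0 → Q.eval z ≠ 0) ∧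
      ∃ c₀ : ℂ, c₀ ≠ 0 ∧ ∃ n : ℤ,
        ∀ z : ℂ, z ≠ 0 → P.eval z / Q.eval z = c₀ * z ^ n := by
  -- no common roots
  have hnc : ∀ z : ℂ, P.eval z = 0 → Q.eval z ≠ 0 := by
    intro z hz hq
    obtain ⟨u, v, huv⟩ := hcop
    have := congrArg (Polynomial.eval z) huv
    simp [hz, hq] at this
  -- evaluated identity
  have heval : ∀ (γ : Γ) (z : ℂ),
      P.eval ((γ : ℂˣ) * z) * Q.eval z =
        ((c γ : ℂˣ) : ℂ) * Q.eval ((γ : ℂˣ) * z) * P.eval z := by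
    intro γ z
    have := congrArg (Polynomial.eval z) (heq γ)
    simpa [Polynomial.eval_comp] using this
  -- invariance of root sets
  have hPempty : {z : ℂ | z ≠ 0 ∧ P.eval z = 0} = ∅ := by
    apply aux_empty Γ hacc
    · exact (P.finite_setOf_isRoot hP).subset (fun z hz => hz.2)
    · exact fun z hz => hz.1
    · rintro γ hγ z ⟨hz0, hz⟩
      refine ⟨mul_ne_zero γ.ne_zero hz0, ?_⟩
      have h := heval ⟨γ, hγ⟩ z
      rw [hz] at h
      simp only [mul_zero] at h
      exact (mul_eq_zero.mp h).resolve_right (hnc z hz)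
  have hQempty : {z : ℂ | z ≠ 0 ∧ Q.eval z = 0} = ∅ := by
    apply aux_empty Γ hacc
    · exact (Q.finite_setOf_isRoot hQ).subset (fun z hz => hz.2)
    · exact fun z hz => hz.1
    · rintro γ hγ z ⟨hz0, hz⟩
      refine ⟨mul_ne_zero γ.ne_zero hz0, ?_⟩
      have h := heval ⟨γ, hγ⟩ z
      rw [hz] at h
      simp only [mul_zero, zero_eq_mul] at h
      have hPz : P.eval z ≠ 0 := by
        intro hpz
        exact hnc z hpz hz
      rcases h with h1 | h1
      · rcases mul_eq_zero.mp h1 with h2 | h2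
        · exact absurd h2 ((c ⟨γ, hγ⟩) : ℂˣ).ne_zero
        · exact h2
      · exact absurd h1 hPz
  have hPne : ∀ z : ℂ, z ≠ 0 → P.eval z ≠ 0 := by
    intro z hz0 hz
    exact Set.eq_empty_iff_forall_notMem.mp hPempty z ⟨hz0, hz⟩
  have hQne : ∀ z : ℂ, z ≠ 0 → Q.eval z ≠ 0 := by
    intro z hz0 hz
    exact Set.eq_empty_iff_forall_notMem.mp hQempty z ⟨hz0, hz⟩
  refine ⟨hPne, hQne, P.leadingCoeff / Q.leadingCoeff,
    div_ne_zero (Polynomial.leadingCoeff_ne_zero.mpr hP)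
      (Polynomial.leadingCoeff_ne_zero.mpr hQ),
    (Multiset.card P.roots : ℤ) - (Multiset.card Q.roots : ℤ), ?_⟩
  intro z hz
  rw [monomial_form P hP hPne z, monomial_form Q hQ hQne z,
    zpow_sub₀ hz, zpow_natCast, zpow_natCast, mul_div_mul_comm]
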